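/- Let 𝕋 be an almost periodic time scale (Π ≠ {0}) with bounded graininess μ̄ := sup_{t∈𝕋} μ(t) < ∞, and let a > 0. Then for all s, t ∈ 𝕋 with s ≤ t, e_{⊖a}(t, s) ≤ exp(−a(t − s)/(1 + μ̄·a)). -/

import Mathlib

open MeasureTheory Filter Set

noncomputable section

/-- Forward jump operator of a time scale `T`. -/
def tsSigma (T : Set ℝ) (t : ℝ) : ℝ := sInf {s | s ∈ T ∧ t < s}

/-- Graininess of a time scale. -/
def tsGrain (T : Set ℝ) (t : ℝ) : ℝ := tsSigma T t - t

/-- The set `Π` of translation numbers of a time scale. -/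
def tsPi (T : Set ℝ) : Set ℝ := {τ : ℝ | ∀ t ∈ T, t + τ ∈ T ∧ t - τ ∈ T}

/-- An almost periodic time scale: a nonempty closed subset of `ℝ` with `Π ≠ {0}`. -/
def APTimeScale (T : Set ℝ) : Prop :=
  T.Nonempty ∧ IsClosed T ∧ ∃ τ ∈ tsPi T, τ ≠ 0

/-- The Δ-measure of the time scale `T`:
Lebesgue measure restricted to `T` plus point masses `μ(t)·δ_t` at right-scattered points. -/
def deltaMeasure (T : Set ℝ) : Measure ℝ :=
  volume.restrict T +
    Measure.sum (fun p : {t : ℝ // t ∈ T ∧ t < tsSigma T t} =>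
      (ENNReal.ofReal (tsGrain T p.1)) • Measure.dirac (p.1 : ℝ))

/-- The integrand `g_a` appearing in the generalized exponential function. -/
def gExp (T : Set ℝ) (a : ℝ) (τ : ℝ) : ℝ :=
  if 0 < tsGrain T τ then Real.log (1 + tsGrain T τ * a) / tsGrain T τ else a

/-- The generalized exponential function `e_{⊖a}(t, s)` (intended for `s ≤ t`). -/
def eOminus (T : Set ℝ) (a t s : ℝ) : ℝ :=
  Real.exp (-∫ τ in Ico s t ∩ T, gExp T a τ ∂(deltaMeasure T))

/-- `t̄ = min([0,∞) ∩ T)`. -/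
def tsT0 (T : Set ℝ) : ℝ := sInf {t : ℝ | t ∈ T ∧ 0 ≤ t}

/-- `Q_r = [t̄ - r, t̄ + r] ∩ T`. -/
def Qr (T : Set ℝ) (r : ℝ) : Set ℝ := Icc (tsT0 T - r) (tsT0 T + r) ∩ T

/-- `u(Q_r) = ∫_{Q_r} u dμ_Δ`. -/
def uQ (T : Set ℝ) (u : ℝ → ℝ) (r : ℝ) : ℝ := ∫ t in Qr T r, u t ∂(deltaMeasure T)

/-- The filter `r → ∞` along `Π`. -/
def alongPi (T : Set ℝ) : Filter ℝ := atTop ⊓ 𝓟 (tsPi T)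

/-- The filter `|t| → ∞`, `t ∈ T`. -/
def absAtTopIn (T : Set ℝ) : Filter ℝ := (atTop ⊔ atBot) ⊓ 𝓟 T

/-- The class `U_∞` of admissible weights on the time scale `T`. -/
def UInfty (T : Set ℝ) (u : ℝ → ℝ) : Prop :=
  Measurable u ∧ (∀ t ∈ T, 0 < u t) ∧
  (∀ s : Set ℝ, Bornology.IsBounded s → IntegrableOn u (s ∩ T) (deltaMeasure T)) ∧
  (∃ c > 0, ∀ t ∈ T, c ≤ u t) ∧
  Tendsto (uQ T u) (alongPi T) atTop

/-- The class `U_∞^Inv` of weights: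
`limsup_{|t|→∞, t∈T} u(t+s)/u(t) < ∞` for every `s ∈ Π`. -/
def UInftyInv (T : Set ℝ) (u : ℝ → ℝ) : Prop :=
  UInfty T u ∧ ∀ s ∈ tsPi T, ∃ C : ℝ, ∀ᶠ t in absAtTopIn T, u (t + s) / u t ≤ C

variable {E : Type*} [NormedAddCommGroup E]

/-- Almost periodic functions on a time scale (Bohr-type definition via `Π`). -/
def APfun (T : Set ℝ) (f : ℝ → E) : Prop :=
  ContinuousOn f T ∧
  ∀ ε > 0, ∃ l > 0, ∀ x : ℝ, ∃ τ ∈ tsPi T, τ ∈ Icc x (x + l) ∧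
    ∀ t ∈ T, ‖f (t + τ) - f t‖ < ε

/-- Bounded continuous functions on the time scale `T`. -/
def BCfun (T : Set ℝ) (f : ℝ → E) : Prop :=
  ContinuousOn f T ∧ ∃ C : ℝ, ∀ t ∈ T, ‖f t‖ ≤ C

/-- The weighted ergodic space `PAP₀(T, E, u)`. -/
def PAP0fun (T : Set ℝ) (u : ℝ → ℝ) (f : ℝ → E) : Prop :=
  BCfun T f ∧
  Tendsto (fun r => (uQ T u r)⁻¹ * ∫ t in Qr T r, ‖f t‖ * u t ∂(deltaMeasure T))
    (alongPi T) (nhds 0)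

/-- Weighted pseudo-almost periodic functions on the time scale `T`. -/
def PAPfun (T : Set ℝ) (u : ℝ → ℝ) (f : ℝ → E) : Prop :=
  ∃ g h : ℝ → E, APfun T g ∧ PAP0fun T u h ∧ ∀ t ∈ T, f t = g t + h t

/-- `d` is the Δ-derivative of `f` at `t ∈ T`. -/
def deltaDeriv [NormedSpace ℝ E] (T : Set ℝ) (f : ℝ → E) (t : ℝ) (d : E) : Prop :=
  ∀ ε > 0, ∃ δ > 0, ∀ s ∈ T, |s - t| < δ →
    ‖f (tsSigma T t) - f s - (tsSigma T t - s) • d‖ ≤ ε * |tsSigma T t - s|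

/-- A fixed matrix norm (the ℓ¹ norm of the entries). -/
def matNorm {n : ℕ} (M : Matrix (Fin n) (Fin n) ℝ) : ℝ := ∑ i, ∑ j, |M i j|

/-- The linear system `x^Δ = A(t) x` admits an exponential dichotomy on `T`. -/
def ExpDichotomy {n : ℕ} (T : Set ℝ) (A : ℝ → Matrix (Fin n) (Fin n) ℝ) : Prop :=
  ∃ K > (0 : ℝ), ∃ α > (0 : ℝ), ∃ P : Matrix (Fin n) (Fin n) ℝ, P * P = P ∧
    ∃ X : ℝ → Matrix (Fin n) (Fin n) ℝ,
      (∀ t ∈ T, IsUnit (X t)) ∧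
      (∀ t ∈ T, ∀ i j, deltaDeriv T (fun s => X s i j) t ((A t * X t) i j)) ∧
      (∀ s ∈ T, ∀ t ∈ T, tsSigma T s ≤ t →
        matNorm (X t * P * (X (tsSigma T s))⁻¹) ≤ K * eOminus T α t (tsSigma T s)) ∧
      (∀ s ∈ T, ∀ t ∈ T, t ≤ tsSigma T s →
        matNorm (X t * (1 - P) * (X (tsSigma T s))⁻¹) ≤ K * eOminus T α (tsSigma T s) t)

/-- `x` is a bounded continuous solution on `T` of `x^Δ(t) = A(t) x(t) + F(t)`. -/
def IsLinBddSol {n : ℕ} (T : Set ℝ) (A : ℝ → Matrix (Fin n) (Fin n) ℝ)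
    (F x : ℝ → Fin n → ℝ) : Prop :=
  BCfun T x ∧ ∀ t ∈ T, deltaDeriv T x t ((A t).mulVec (x t) + F t)

/-- `x` is a (continuous, Δ-differentiable) solution of the delayed cellular neural network
on the set `S ⊆ T`. -/
def IsCNNSol {n : ℕ} (T S : Set ℝ) (c : Fin n → ℝ → ℝ) (a b : Fin n → Fin n → ℝ → ℝ)
    (f : Fin n → ℝ → ℝ) (γ : Fin n → Fin n → ℝ) (I : Fin n → ℝ → ℝ)
    (x : ℝ → Fin n → ℝ) : Prop :=
  ContinuousOn x T ∧
  ∀ t ∈ S, ∀ i, deltaDeriv T (fun s => x s i) t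
    (-(c i t) * x t i + (∑ j, a i j t * f j (x t j)) +
      (∑ j, b i j t * f j (x (t - γ i j) j)) + I i t)

end
/-- Bound on the generalized exponential: if `T` is an almost periodic time scale with bounded
graininess `μ̄ := sup_{t ∈ T} μ(t) < ∞` and `a > 0`, then for all `s, t ∈ T` with `s ≤ t`,
`e_{⊖a}(t, s) ≤ exp(−a(t − s)/(1 + μ̄·a))`. -/
theorem eOminus_le_exp (T : Set ℝ) (hT : APTimeScale T)
    (hbdd : BddAbove (Set.range fun t : T => tsGrain T t))
    (a : ℝ) (ha : 0 < a) :
    ∀ s ∈ T, ∀ t ∈ T, s ≤ t →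
      eOminus T a t s ≤ Real.exp (-(a * (t - s)) / (1 + (⨆ p : T, tsGrain T (p : ℝ)) * a)) := by
  classical
  obtain ⟨⟨t0, ht0⟩, hclosed, τ0, hτ0, hτ0ne⟩ := hT
  -- a positive translation number
  obtain ⟨τ, hτpos, hτ⟩ : ∃ τ > (0 : ℝ), ∀ t ∈ T, t + τ ∈ T ∧ t - τ ∈ T := by
    rcases hτ0ne.lt_or_gt with h | h
    · refine ⟨-τ0, by linarith, fun t ht => ⟨?_, ?_⟩⟩
      · simpa [sub_eq_add_neg] using (hτ0 t ht).2
      · simpa [sub_neg_eq_add] using (hτ0 t ht).1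
    · exact ⟨τ0, h, hτ0⟩
  -- T is unbounded above
  have hub : ∀ b : ℝ, ∃ y ∈ T, b < y := by
    intro b
    have hmemn : ∀ n : ℕ, t0 + n * τ ∈ T := by
      intro n
      induction n with
      | zero => simpa using ht0
      | succ n ih =>
        have h' := (hτ _ ih).1
        have heq : t0 + (n : ℝ) * τ + τ = t0 + ((n : ℕ) + 1 : ℕ) * τ := by
          push_cast; ring
        exact heq ▸ h'
    obtain ⟨n, hn⟩ := exists_nat_gt ((b - t0) / τ)
    refine ⟨t0 + n * τ, hmemn n, ?_⟩
    have := (div_lt_iff₀ hτpos).1 hn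
    linarith
  have hSne : ∀ t : ℝ, {s | s ∈ T ∧ t < s}.Nonempty := by
    intro t; obtain ⟨y, hy, h⟩ := hub t; exact ⟨y, hy, h⟩
  have hSbdd : ∀ t : ℝ, BddBelow {s | s ∈ T ∧ t < s} := fun t => ⟨t, fun x hx => hx.2.le⟩
  have hle : ∀ t : ℝ, t ≤ tsSigma T t := fun t => le_csInf (hSne t) fun x hx => hx.2.le
  have hmemσ : ∀ t : ℝ, tsSigma T t ∈ T := by
    intro t
    have h1 := (isGLB_csInf (hSne t) (hSbdd t)).mem_closure (hSne t)
    have h2 : closure {s | s ∈ T ∧ t < s} ⊆ T :=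
      hclosed.closure_subset_iff.2 fun x hx => hx.1
    exact h2 h1
  have hσle : ∀ t u : ℝ, u ∈ T → t < u → tsSigma T t ≤ u := fun t u hu htu =>
    csInf_le (hSbdd t) ⟨hu, htu⟩
  have hmono : Monotone (tsSigma T) := fun t t' h =>
    csInf_le_csInf (hSbdd t) (hSne t') fun x hx => ⟨hx.1, lt_of_le_of_lt h hx.2⟩
  have hgr0 : ∀ t : ℝ, 0 ≤ tsGrain T t := fun t => sub_nonneg.2 (hle t)
  set M := ⨆ p : T, tsGrain T (p : ℝ) with hM
  have hMge : ∀ p : ℝ, p ∈ T → tsGrain T p ≤ M := fun p hp => le_ciSup hbdd ⟨p, hp⟩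
  have hM0 : 0 ≤ M := le_trans (hgr0 t0) (hMge t0 ht0)
  have hden : 0 < 1 + M * a := by nlinarith
  set c := a / (1 + M * a) with hc
  have hcpos : 0 < c := div_pos ha hden
  -- pointwise bounds on gExp
  have hglb : ∀ p ∈ T, c ≤ gExp T a p := by
    intro p hp
    by_cases h : 0 < tsGrain T p
    · rw [gExp, if_pos h]
      set m := tsGrain T p with hm
      have hmM : m ≤ M := hMge p hp
      have h1 : 0 < 1 + m * a := by nlinarith
      have hlog : m * a / (1 + m * a) ≤ Real.log (1 + m * a) := by
        have h2 := Real.log_le_sub_one_of_pos (show (0 : ℝ) < (1 + m * a)⁻¹ by positivity)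
        rw [Real.log_inv] at h2
        have h3 : (1 + m * a)⁻¹ - 1 = -(m * a / (1 + m * a)) := by field_simp; ring
        rw [h3] at h2
        linarith
      calc c = a / (1 + M * a) := hc
        _ ≤ a / (1 + m * a) := by
            apply div_le_div_of_nonneg_left ha.le h1; nlinarith
        _ = (m * a / (1 + m * a)) / m := by field_simp
        _ ≤ Real.log (1 + m * a) / m := by gcongr
    · rw [gExp, if_neg h, hc, div_le_iff₀ hden]
      nlinarith [mul_nonneg hM0 (mul_nonneg ha.le ha.le)]
  have hgub : ∀ p : ℝ, gExp T a p ≤ a := by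
    intro p
    rw [gExp]
    split_ifs with h
    · have h1 : 0 < 1 + tsGrain T p * a := by nlinarith
      have h2 := Real.log_le_sub_one_of_pos h1
      rw [div_le_iff₀ h]
      nlinarith
    · exact le_rfl
  have hg0 : ∀ p : ℝ, 0 ≤ gExp T a p := by
    intro p
    rw [gExp]
    split_ifs with h
    · apply div_nonneg _ h.le
      apply Real.log_nonneg
      nlinarith
    · exact ha.le
  -- measurability
  have hmeasT : MeasurableSet T := hclosed.measurableSet
  have hgrmeas : Measurable (tsGrain T) := hmono.measurable.sub measurable_id
  have hgmeas : Measurable (gExp T a) := by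
    have hset : MeasurableSet {τ : ℝ | 0 < tsGrain T τ} :=
      measurableSet_lt measurable_const hgrmeas
    exact Measurable.ite hset
      ((Real.measurable_log.comp (measurable_const.add (hgrmeas.mul_const a))).div hgrmeas)
      measurable_const
  -- disjointness of the gap intervals
  have hdisj : ∀ p q : ℝ, p ∈ T → q ∈ T → p ≠ q →
      Disjoint (Ioo p (tsSigma T p)) (Ioo q (tsSigma T q)) := by
    intro p q hpT hqT hne
    rcases hne.lt_or_gt with h | h
    · refine Set.disjoint_left.2 fun x hx hx' => ?_
      have h1 : tsSigma T p ≤ q := hσle p q hqT h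
      have := hx.2
      have := hx'.1
      linarith
    · refine Set.disjoint_left.2 fun x hx hx' => ?_
      have h1 : tsSigma T q ≤ p := hσle q p hpT h
      have := hx.1
      have := hx'.2
      linarith
  have hcnt : {t : ℝ | t ∈ T ∧ t < tsSigma T t}.Countable := by
    refine Set.PairwiseDisjoint.countable_of_Ioo (y := tsSigma T) ?_ fun x hx => hx.2
    intro p hp q hq hne
    exact hdisj p q hp.1 hq.1 hne
  haveI : Countable {t : ℝ // t ∈ T ∧ t < tsSigma T t} := hcnt.to_subtype
  intro s hs t ht hst
  set A := Ico s t ∩ T with hA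
  have hAmeas : MeasurableSet A := measurableSet_Ico.inter hmeasT
  set B := fun p : {t : ℝ // t ∈ T ∧ t < tsSigma T t} =>
    if (p : ℝ) ∈ A then Ioo (p : ℝ) (tsSigma T p) else (∅ : Set ℝ) with hB
  have hBmeas : ∀ p, MeasurableSet (B p) := by
    intro p
    simp only [hB]
    split_ifs
    · exact measurableSet_Ioo
    · exact MeasurableSet.empty
  have hdirac : ∀ p : {t : ℝ // t ∈ T ∧ t < tsSigma T t},
      (ENNReal.ofReal (tsGrain T p.1) • Measure.dirac (p.1 : ℝ)) A = volume (B p) := by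
    intro p
    rw [Measure.smul_apply, Measure.dirac_apply' _ hAmeas]
    by_cases hp : (p : ℝ) ∈ A
    · simp only [hB]
      simp only [hp, if_pos, Set.indicator_of_mem hp, Real.volume_Ioo, tsGrain]
      simp
    · simp only [hB]
      simp only [hp, if_neg, Set.indicator_of_notMem hp]
      simp [hp]
  have hsum : deltaMeasure T A = volume A + ∑' p, volume (B p) := by
    rw [deltaMeasure, Measure.add_apply, Measure.sum_apply _ hAmeas,
      Measure.restrict_apply hAmeas]
    have hAT : A ∩ T = A := inter_eq_left.2 inter_subset_right
    rw [hAT]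
    congr 1
    exact tsum_congr hdirac
  have hBdisj : Pairwise (Function.onFun Disjoint B) := by
    intro p q hne
    have : (p : ℝ) ≠ q := fun h => hne (Subtype.coe_injective h)
    simp only [hB]
    refine Disjoint.mono ?_ ?_ (hdisj p q p.2.1 q.2.1 this)
    · beta_reduce; split_ifs <;> simp
    · beta_reduce; split_ifs <;> simp
  have hUnion : volume (⋃ p, B p) = ∑' p, volume (B p) :=
    measure_iUnion hBdisj hBmeas
  have hcover : Ico s t ⊆ A ∪ ⋃ p, B p := by
    intro x hx
    by_cases hxT : x ∈ T
    · exact Or.inl ⟨hx, hxT⟩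
    · right
      set p := sSup (T ∩ Iic x) with hp
      have hne' : (T ∩ Iic x).Nonempty := ⟨s, hs, hx.1⟩
      have hbdd' : BddAbove (T ∩ Iic x) := ⟨x, fun y hy => hy.2⟩
      have hpmem := (hclosed.inter isClosed_Iic).csSup_mem hne' hbdd'
      have hpT : p ∈ T := hpmem.1
      have hpx : p ≤ x := hpmem.2
      have hplt : p < x := lt_of_le_of_ne hpx fun h => hxT (h ▸ hpT)
      have hσgt : x ≤ tsSigma T p := by
        refine le_csInf (hSne p) fun u hu => ?_
        by_contra hux
        push_neg at hux
        have : u ≤ p := le_csSup hbdd' ⟨hu.1, hux.le⟩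
        exact absurd hu.2 (not_lt.2 this)
      have hσne : tsSigma T p ≠ x := fun h => hxT (h ▸ hmemσ p)
      have hσgt' : x < tsSigma T p := lt_of_le_of_ne hσgt (Ne.symm hσne)
      have hsp : s ≤ p := le_csSup hbdd' ⟨hs, hx.1⟩
      have hpA : p ∈ A := ⟨⟨hsp, hplt.trans hx.2⟩, hpT⟩
      have hpscat : p < tsSigma T p := hplt.trans hσgt'
      refine mem_iUnion.2 ⟨⟨p, hpT, hpscat⟩, ?_⟩
      simp only [hB]
      beta_reduce
      rw [if_pos hpA]
      exact ⟨hplt, hσgt'⟩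
  have hlow : ENNReal.ofReal (t - s) ≤ deltaMeasure T A := by
    calc ENNReal.ofReal (t - s) = volume (Ico s t) := Real.volume_Ico.symm
      _ ≤ volume (A ∪ ⋃ p, B p) := measure_mono hcover
      _ ≤ volume A + volume (⋃ p, B p) := measure_union_le _ _
      _ = volume A + ∑' p, volume (B p) := by rw [hUnion]
      _ = deltaMeasure T A := hsum.symm
  have hBsub : ∀ p, B p ⊆ Ioc s t := by
    intro p x hx
    simp only [hB] at hx
    split_ifs at hx with hpA
    · exact ⟨lt_of_le_of_lt hpA.1.1 hx.1,
        le_trans hx.2.le (hσle (p : ℝ) t ht hpA.1.2)⟩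
    · exact absurd hx (notMem_empty x)
  have hfin : deltaMeasure T A < ⊤ := by
    rw [hsum, ← hUnion]
    have h1 : volume A ≤ ENNReal.ofReal (t - s) := by
      calc volume A ≤ volume (Ico s t) := measure_mono inter_subset_left
        _ = _ := Real.volume_Ico
    have h2 : volume (⋃ p, B p) ≤ ENNReal.ofReal (t - s) :=
      le_trans (measure_mono (iUnion_subset hBsub)) (le_of_eq Real.volume_Ioc)
    exact lt_of_le_of_lt (add_le_add h1 h2)
      (ENNReal.add_lt_top.2 ⟨ENNReal.ofReal_lt_top, ENNReal.ofReal_lt_top⟩)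
  have hint : IntegrableOn (gExp T a) A (deltaMeasure T) := by
    refine Integrable.mono' ((integrableOn_const_iff (C := a)).2 (Or.inr hfin))
      hgmeas.aestronglyMeasurable ?_
    filter_upwards with x
    rw [Real.norm_eq_abs, abs_of_nonneg (hg0 x)]
    exact hgub x
  have hmuA : t - s ≤ (deltaMeasure T A).toReal :=
    (ENNReal.ofReal_le_iff_le_toReal (ne_of_lt hfin)).1 hlow
  have hintlb : c * (t - s) ≤ ∫ τ in A, gExp T a τ ∂(deltaMeasure T) := by
    have h := setIntegral_ge_of_const_le hAmeas (ne_of_lt hfin)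
      (fun x hx => hglb x hx.2) hint
    calc c * (t - s) ≤ c * (deltaMeasure T A).toReal :=
          mul_le_mul_of_nonneg_left hmuA hcpos.le
      _ ≤ _ := by rw [smul_eq_mul, mul_comm] at h; exact h
  rw [eOminus, Real.exp_le_exp, ← hA]
  have heq : -(a * (t - s)) / (1 + M * a) = -(c * (t - s)) := by
    rw [hc]; field_simp
  rw [heq]
  linarith
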